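/- For integers n ≥ k ≥ 4 and 1 ≤ s ≤ ⌊k/2⌋ - 1, the graph W(n,k-1,s) := K_s ∨ ((n-k+s+1)·K_1 ∪ K_{k-2s-1}) is connected and contains no path on k vertices. -/

import Mathlib

open SimpleGraph

/-- Is the vertex in the third component (the clique `K_c`)? -/
def inClq {a b c : ℕ} : (Fin a ⊕ (Fin b ⊕ Fin c)) → Prop
  | Sum.inr (Sum.inr _) => True
  | _ => False

/-- The graph `W(a,b,c) = K_a ∨ (b·K_1 ∪ K_c)`: a clique on `a` vertices joined to
`b` isolated vertices together with a clique on `c` vertices. -/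
def Wgraph (a b c : ℕ) : SimpleGraph (Fin a ⊕ (Fin b ⊕ Fin c)) where
  Adj x y := x ≠ y ∧ (x.isLeft ∨ y.isLeft ∨ (inClq x ∧ inClq y))
  symm := by
    constructor
    rintro x y ⟨hne, h⟩
    exact ⟨hne.symm, by tauto⟩
  loopless := ⟨fun x h => h.1 rfl⟩

/-- `G` contains a path on `k` vertices. -/
def HasPathOn {V : Type*} (G : SimpleGraph V) (k : ℕ) : Prop :=
  ∃ (u v : V) (p : G.Walk u v), p.IsPath ∧ p.support.length = k

namespace WAux

variable {a b c : ℕ}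

/-- vertex type -/
abbrev V (a b c : ℕ) := Fin a ⊕ (Fin b ⊕ Fin c)

def isL : V a b c → Bool
  | Sum.inl _ => true
  | _ => false

def isI : V a b c → Bool
  | Sum.inr (Sum.inl _) => true
  | _ => false

def isC : V a b c → Bool
  | Sum.inr (Sum.inr _) => true
  | _ => false

def getC : V a b c → Option (Fin c)
  | Sum.inr (Sum.inr m) => some m
  | _ => none

/-- number of maximal runs of clique vertices (counted by run ends) -/
def cruns : List (V a b c) → ℕ
  | [] => 0
  | x :: t => cruns t + (if isC x && !(match t with | [] => false | y :: _ => isC y) then 1 else 0)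

def hL : List (V a b c) → ℕ
  | [] => 0
  | x :: _ => if isL x then 1 else 0

lemma length_eq (l : List (V a b c)) :
    l.length = l.countP isL + l.countP isI + l.countP isC := by
  induction l with
  | nil => simp
  | cons x t ih =>
    rcases x with i | j | m <;> simp [isL, isI, isC, List.countP_cons] at * <;> omega

lemma key (l : List (V a b c)) (h : l.Chain' (Wgraph a b c).Adj) :
    l.countP isI + cruns l + hL l ≤ l.countP isL + 1 := by
  induction l with
  | nil => simp [cruns, hL]
  | cons x t ih =>
    have iht := ih h.tail
    match t, h, iht with
    | [], _, _ =>
      rcases x with i | j | m <;>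
        simp [cruns, hL, isL, isI, isC, List.countP_cons]
    | y :: t', h, iht =>
      have hadj : (Wgraph a b c).Adj x y := (List.isChain_cons_cons.mp h).1
      rcases x with i | j | m <;> rcases y with i' | j' | m' <;>
        simp_all [cruns, hL, isL, isI, isC, List.countP_cons] <;>
        first
          | omega
          | (exfalso; revert hadj; simp [Wgraph, inClq])

lemma cruns_pos : ∀ l : List (V a b c), 0 < l.countP isC → 1 ≤ cruns l
  | [], h => by simp at h
  | [x], h => by rcases x with i | j | m <;> simp_all [cruns, isC, List.countP_cons]
  | x :: y :: t, h => by
    have ih := cruns_pos (y :: t)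
    rcases x with i | j | m <;> rcases y with i' | j' | m' <;>
      simp_all [cruns, isC, List.countP_cons] <;>
      first
        | omega
        | (obtain ⟨x0, hx0⟩ := h; exact ih x0 hx0)

lemma countL_eq (l : List (V a b c)) :
    l.countP isL = (l.filterMap Sum.getLeft?).length := by
  induction l with
  | nil => simp
  | cons x t ih => rcases x with i | j <;> simp [isL, List.countP_cons, List.filterMap_cons, ih]

lemma countC_eq (l : List (V a b c)) :
    l.countP isC = (l.filterMap getC).length := by
  induction l with
  | nil => simp
  | cons x t ih => rcases x with i | j | m <;> simp [isC, getC, List.countP_cons, List.filterMap_cons, ih]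

lemma countL_le (l : List (V a b c)) (h : l.Nodup) : l.countP isL ≤ a := by
  rw [countL_eq]
  have hn : (l.filterMap Sum.getLeft?).Nodup := by
    refine h.filterMap ?_
    rintro (x | x) (y | y) b hx hy <;> simp_all
  simpa using hn.length_le_card

lemma countC_le (l : List (V a b c)) (h : l.Nodup) : l.countP isC ≤ c := by
  rw [countC_eq]
  have hn : (l.filterMap getC).Nodup := by
    refine h.filterMap ?_
    rintro (x | x | x) (y | y | y) b hx hy <;> simp_all [getC]
  simpa using hn.length_le_card

end WAux

theorem Wgraph_connected_pathFree (n k s : ℕ) (hnk : n ≥ k) (hk : k ≥ 4)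
    (hs1 : 1 ≤ s) (hs2 : s ≤ k / 2 - 1) :
    (Wgraph s (n - k + s + 1) (k - 2 * s - 1)).Connected ∧
    ¬ HasPathOn (Wgraph s (n - k + s + 1) (k - 2 * s - 1)) k := by
  set b := n - k + s + 1
  set c := k - 2 * s - 1
  set G := Wgraph s b c with hG
  constructor
  · rw [connected_iff]
    refine ⟨fun u v => ?_, ⟨Sum.inl ⟨0, hs1⟩⟩⟩
    have hreach : ∀ x, G.Reachable (Sum.inl ⟨0, hs1⟩ : WAux.V s b c) x := by
      intro x
      by_cases hx : x = (Sum.inl ⟨0, hs1⟩ : WAux.V s b c)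
      · rw [hx]
      · exact (show G.Adj (Sum.inl ⟨0, hs1⟩) x from ⟨fun h => hx h.symm, Or.inl rfl⟩).reachable
    exact (hreach u).symm.trans (hreach v)
  · rintro ⟨u, v, p, hp, hlen⟩
    have hchain : p.support.Chain' G.Adj := p.isChain_adj_support
    have hnd : p.support.Nodup := hp.support_nodup
    have h1 := WAux.key p.support hchain
    have h2 := WAux.countL_le p.support hnd
    have h3 := WAux.countC_le p.support hnd
    have h4 := WAux.length_eq p.support
    rw [hlen] at h4
    by_cases hc : 0 < p.support.countP WAux.isC
    · have h5 := WAux.cruns_pos p.support hc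
      omega
    · omega
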